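/- Let F(T), G(T) ∈ ℤ[T] be monic polynomials that are coprime in ℚ[T]. Then the quotient ring ℤ[T]/(F(T), G(T)) is a finite ring whose cardinality equals the absolute value of the resultant Res(F, G). -/

import Mathlib

open Polynomial

open Module

lemma card_quot_range_eq_natAbs_det {M : Type*} [CommRing M]
    [Module.Free ℤ M] [Module.Finite ℤ M] (φ : M →ₗ[ℤ] M) (hφ : Function.Injective φ) :
    Nat.card (M ⧸ LinearMap.range φ) ≠ 0 ∧
      Nat.card (M ⧸ LinearMap.range φ) = (LinearMap.det φ).natAbs := by
  classical
  set N := LinearMap.range φ with hN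
  let b := Module.Free.chooseBasis ℤ M
  set ι := Module.Free.ChooseBasisIndex ℤ M
  obtain ⟨n, snf⟩ := N.smithNormalForm b
  let e1 := LinearEquiv.ofInjective φ hφ
  have hn : n = Fintype.card ι := by
    have h1 : finrank ℤ N = n := by
      rw [finrank_eq_card_basis snf.bN, Fintype.card_fin]
    have h2 : finrank ℤ M = Fintype.card ι := finrank_eq_card_basis b
    rw [← h1, ← e1.finrank_eq, h2]
  have ha : ∀ i, snf.a i ≠ 0 := by
    intro i hi
    apply snf.bN.ne_zero i
    have := snf.snf i
    rw [hi] at this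
    exact Subtype.ext (this.trans (zero_smul ℤ _))
  have hindex : N.toAddSubgroup.index = ∏ i, (snf.a i).natAbs := by
    rw [snf.toAddSubgroup_index_eq_pow_mul_prod]
    have h0 : Fintype.card ι - n = 0 := by omega
    rw [h0, pow_zero, one_mul]
    simp [Ideal.span_singleton_toAddSubgroup_eq_zmultiples, Int.index_zmultiples]
  have hcard : Nat.card (M ⧸ N) = ∏ i, (snf.a i).natAbs := hindex
  refine ⟨by simp [hcard, Finset.prod_eq_zero_iff, ha], ?_⟩
  have hf : Function.Bijective snf.f :=
    (Fintype.bijective_iff_injective_and_card snf.f).mpr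
      ⟨snf.f.injective, by rw [Fintype.card_fin, hn]⟩
  let eF : Fin n ≃ ι := Equiv.ofBijective snf.f hf
  let bN' := snf.bN.reindex eF
  have hbN' : ∀ i, (bN' i : M) = snf.a (eF.symm i) • snf.bM i := by
    intro i
    simp only [bN', Basis.reindex_apply]
    rw [snf.snf, show snf.f (eF.symm i) = i from eF.apply_symm_apply i]
  let e' := snf.bM.equiv bN' (Equiv.refl ι)
  let ψ := N.subtype.comp e'.toLinearMap
  have hψ : ∀ i, ψ (snf.bM i) = snf.a (eF.symm i) • snf.bM i := by
    intro i
    simp only [ψ, LinearMap.comp_apply, LinearEquiv.coe_coe, e', Basis.equiv_apply,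
      Equiv.refl_apply]
    exact hbN' i
  have hdetψ : LinearMap.det ψ = ∏ i, snf.a (eF.symm i) := by
    rw [← LinearMap.det_toMatrix snf.bM]
    have : LinearMap.toMatrix snf.bM snf.bM ψ = Matrix.diagonal fun i => snf.a (eF.symm i) := by
      ext i j
      rw [LinearMap.toMatrix_apply, hψ, map_smul, Basis.repr_self]
      by_cases h : i = j
      · subst h; simp
      · simp [Finsupp.single_apply, Ne.symm h, Matrix.diagonal_apply_ne _ h]
    rw [this, Matrix.det_diagonal]
  have hassoc : Associated (LinearMap.det φ) (LinearMap.det ψ) := by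
    have h1 : N.subtype.comp e1.toLinearMap = φ := by
      ext x; simp [e1]
    have := LinearMap.associated_det_comp_equiv N.subtype e1 e'
    rwa [h1] at this
  have habs : (LinearMap.det φ).natAbs = (LinearMap.det ψ).natAbs :=
    Int.natAbs_eq_iff_associated.mpr hassoc
  rw [hcard, habs, hdetψ]
  rw [show ((∏ i, snf.a (eF.symm i)).natAbs : ℕ) = ∏ i, (snf.a (eF.symm i)).natAbs from
    map_prod Int.natAbsHom _ _]
  exact (Equiv.prod_comp eF.symm fun j => (snf.a j).natAbs).symm


/-- The resultant of two monic integer polynomials `F`, `G`, defined as the norm of the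
image of `G` in `ℤ[T]/(F)` (which is a free `ℤ`-module since `F` is monic). -/
noncomputable def intResultant (F G : Polynomial ℤ) : ℤ :=
  Algebra.norm ℤ (AdjoinRoot.mk F G)

/-- Let `F, G ∈ ℤ[T]` be monic polynomials that are coprime in `ℚ[T]`.  Then the quotient
ring `ℤ[T]/(F, G)` is a finite ring whose cardinality equals `|Res(F, G)|`. -/
theorem finite_quotient_card_eq_natAbs_resultant (F G : Polynomial ℤ)
    (hF : F.Monic) (hG : G.Monic)
    (hcop : IsCoprime (F.map (Int.castRingHom ℚ)) (G.map (Int.castRingHom ℚ))) :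
    Finite (Polynomial ℤ ⧸ Ideal.span ({F, G} : Set (Polynomial ℤ))) ∧
      Nat.card (Polynomial ℤ ⧸ Ideal.span ({F, G} : Set (Polynomial ℤ))) =
        (intResultant F G).natAbs := by
  classical
  letI : Module.Free ℤ (AdjoinRoot F) := Module.Free.of_basis (AdjoinRoot.powerBasis' hF).basis
  letI : Module.Finite ℤ (AdjoinRoot F) := Module.Finite.of_basis (AdjoinRoot.powerBasis' hF).basis
  set g : AdjoinRoot F := AdjoinRoot.mk F G with hg
  -- multiplication by `g` is injective
  have hker : ∀ x : AdjoinRoot F, g * x = 0 → x = 0 := by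
    intro x hx
    obtain ⟨P, rfl⟩ := AdjoinRoot.mk_surjective x
    rw [hg, ← map_mul, AdjoinRoot.mk_eq_zero] at hx
    rw [AdjoinRoot.mk_eq_zero]
    have hdvd : F.map (Int.castRingHom ℚ) ∣ (G.map (Int.castRingHom ℚ)) *
        (P.map (Int.castRingHom ℚ)) := by
      rw [← Polynomial.map_mul]
      exact Polynomial.map_dvd _ hx
    have hFP := hcop.dvd_of_dvd_mul_left hdvd
    exact (Polynomial.map_dvd_map (Int.castRingHom ℚ) Int.cast_injective hF).mp hFP
  set φ : AdjoinRoot F →ₗ[ℤ] AdjoinRoot F := Algebra.lmul ℤ (AdjoinRoot F) g with hφdef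
  have hφapp : ∀ x, φ x = g * x := fun x => rfl
  have hinj : Function.Injective φ := by
    intro a b hab
    have h1 : g * (a - b) = 0 := by
      have h2 : g * a = g * b := by rw [← hφapp, ← hφapp, hab]
      rw [mul_sub, h2, sub_self]
    exact sub_eq_zero.mp (hker _ h1)
  have hrange : LinearMap.range φ = (Ideal.span ({g} : Set (AdjoinRoot F))).restrictScalars ℤ := by
    ext x
    simp only [LinearMap.mem_range, Submodule.restrictScalars_mem, Ideal.mem_span_singleton]
    constructor
    · rintro ⟨y, rfl⟩; exact ⟨y, (hφapp y).symm⟩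
    · rintro ⟨c, rfl⟩; exact ⟨c, hφapp c⟩
  obtain ⟨hne, hcardeq⟩ := card_quot_range_eq_natAbs_det φ hinj
  -- the chain of equivalences
  have hmap : (Ideal.span ({G} : Set (Polynomial ℤ))).map
      (Ideal.Quotient.mk (Ideal.span ({F} : Set (Polynomial ℤ)))) =
      Ideal.span ({g} : Set (AdjoinRoot F)) := by
    rw [Ideal.map_span, Set.image_singleton]
    rfl
  have e : (Polynomial ℤ ⧸ Ideal.span ({F, G} : Set (Polynomial ℤ))) ≃
      (AdjoinRoot F ⧸ Ideal.span ({g} : Set (AdjoinRoot F))) :=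
    ((Ideal.quotEquivOfEq (Ideal.span_insert F {G})).toEquiv).trans
      (((DoubleQuot.quotQuotEquivQuotSup (Ideal.span {F}) (Ideal.span {G})).symm.toEquiv).trans
        ((Ideal.quotEquivOfEq (R := AdjoinRoot F) (I := (Ideal.span ({G} : Set (Polynomial ℤ))).map
          (Ideal.Quotient.mk (Ideal.span ({F} : Set (Polynomial ℤ))))) hmap).toEquiv))
  have e2 : (AdjoinRoot F ⧸ Ideal.span ({g} : Set (AdjoinRoot F))) ≃
      (AdjoinRoot F ⧸ LinearMap.range φ) := by
    rw [hrange]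
    exact (Submodule.Quotient.restrictScalarsEquiv ℤ (Ideal.span {g})).symm.toEquiv
  have hcard : Nat.card (Polynomial ℤ ⧸ Ideal.span ({F, G} : Set (Polynomial ℤ))) =
      Nat.card (AdjoinRoot F ⧸ LinearMap.range φ) :=
    Nat.card_congr (e.trans e2)
  have hnorm : (intResultant F G).natAbs = (LinearMap.det φ).natAbs := by
    rw [intResultant, Algebra.norm_apply]
  refine ⟨?_, by rw [hcard, hcardeq, hnorm]⟩
  have : Nat.card (Polynomial ℤ ⧸ Ideal.span ({F, G} : Set (Polynomial ℤ))) ≠ 0 := by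
    rw [hcard]; exact hne
  exact Nat.finite_of_card_ne_zero this
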